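/- Let n, r be positive integers and T ⊆ ℝ^{n×n} be the tangent space of a rank-r matrix L ∈ ℝ^{n×n} with compact SVD L = UΣVᵀ. Let R, Δ ∈ ℝ^{n×n} and ρ ≥ 0 satisfy ‖P_T(R)‖_F ≤ ρ, ‖P_{T⊥}(R)‖ ≤ 1/2, and ‖P_{T⊥}(Δ)‖_* ≤ 2ρ·‖P_T(Δ)‖_F. Then for every W ∈ T⊥ with ‖W‖ ≤ 1, one has |⟨Δ, R − W⟩| ≤ 4ρ·‖P_T(Δ)‖_F. -/

import Mathlib

open MeasureTheory ProbabilityTheory Matrix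
open scoped ENNReal

noncomputable section

/-- Frobenius norm of a real matrix. -/
def frobNorm {n m : ℕ} (A : Matrix (Fin n) (Fin m) ℝ) : ℝ :=
  Real.sqrt (∑ i, ∑ j, (A i j) ^ 2)

/-- Entrywise sup norm (largest absolute value of an entry). -/
def infNorm {n m : ℕ} (A : Matrix (Fin n) (Fin m) ℝ) : ℝ :=
  ⨆ i, ⨆ j, |A i j|

/-- Largest Euclidean norm of a row. -/
def row2InfNorm {n m : ℕ} (A : Matrix (Fin n) (Fin m) ℝ) : ℝ :=
  ⨆ i, Real.sqrt (∑ j, (A i j) ^ 2)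

/-- The (unsorted) singular values of a real matrix: square roots of the
eigenvalues of `Aᵀ * A`. -/
def singVal {n m : ℕ} (A : Matrix (Fin n) (Fin m) ℝ) : Fin m → ℝ :=
  fun j => Real.sqrt ((Matrix.isHermitian_conjTranspose_mul_self A).eigenvalues j)

/-- Spectral norm: the largest singular value. -/
def specNorm {n m : ℕ} (A : Matrix (Fin n) (Fin m) ℝ) : ℝ :=
  ⨆ j, singVal A j

/-- Nuclear norm: the sum of the singular values. -/
def nucNorm {n m : ℕ} (A : Matrix (Fin n) (Fin m) ℝ) : ℝ :=
  ∑ j, singVal A j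

open Classical in
/-- Projection onto the observed entries. -/
def POmega {n : ℕ} (S : Set (Fin n × Fin n)) (A : Matrix (Fin n) (Fin n) ℝ) :
    Matrix (Fin n) (Fin n) ℝ :=
  fun i j => if (i, j) ∈ S then A i j else 0

/-- Trace inner product of two real matrices. -/
def minner {n m : ℕ} (A B : Matrix (Fin n) (Fin m) ℝ) : ℝ :=
  ∑ i, ∑ j, A i j * B i j

/-- The square-root matrix completion objective. -/
def sqF {n : ℕ} (S : Set (Fin n × Fin n)) (M : Matrix (Fin n) (Fin n) ℝ) (lam : ℝ)
    (L : Matrix (Fin n) (Fin n) ℝ) : ℝ :=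
  frobNorm (POmega S (L - M)) + lam * nucNorm L

/-- `X`-gradient of the nonconvex objective `g`. -/
def gradX {n r : ℕ} (S : Set (Fin n × Fin n)) (M : Matrix (Fin n) (Fin n) ℝ) (lam : ℝ)
    (X Y : Matrix (Fin n) (Fin r) ℝ) : Matrix (Fin n) (Fin r) ℝ :=
  (frobNorm (POmega S (X * Yᵀ - M)))⁻¹ • (POmega S (X * Yᵀ - M) * Y) + lam • X

/-- `Y`-gradient of the nonconvex objective `g`. -/
def gradY {n r : ℕ} (S : Set (Fin n × Fin n)) (M : Matrix (Fin n) (Fin n) ℝ) (lam : ℝ)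
    (X Y : Matrix (Fin n) (Fin r) ℝ) : Matrix (Fin n) (Fin r) ℝ :=
  (frobNorm (POmega S (X * Yᵀ - M)))⁻¹ • ((POmega S (X * Yᵀ - M))ᵀ * X) + lam • Y

/-- Frobenius norm of the full gradient of `g`. -/
def gradNorm {n r : ℕ} (S : Set (Fin n × Fin n)) (M : Matrix (Fin n) (Fin n) ℝ) (lam : ℝ)
    (X Y : Matrix (Fin n) (Fin r) ℝ) : ℝ :=
  Real.sqrt ((frobNorm (gradX S M lam X Y)) ^ 2 + (frobNorm (gradY S M lam X Y)) ^ 2)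

/-- Orthogonal projection onto the tangent space `T = {U Aᵀ + B Vᵀ}` (for `U, V` with
orthonormal columns), with respect to the trace inner product. -/
def projT {n r : ℕ} (U V : Matrix (Fin n) (Fin r) ℝ) (A : Matrix (Fin n) (Fin n) ℝ) :
    Matrix (Fin n) (Fin n) ℝ :=
  U * Uᵀ * A + A * (V * Vᵀ) - U * Uᵀ * A * (V * Vᵀ)

/-- Orthogonal projection onto the orthogonal complement of the tangent space. -/
def projTperp {n r : ℕ} (U V : Matrix (Fin n) (Fin r) ℝ) (A : Matrix (Fin n) (Fin n) ℝ) :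
    Matrix (Fin n) (Fin n) ℝ :=
  A - projT U V A

open Classical in
/-- Indicator (as a real random variable) that an entry is observed. -/
def obsInd {n : ℕ} {Ω₀ : Type} (Obs : Ω₀ → Set (Fin n × Fin n)) (k : Fin n × Fin n)
    (ω : Ω₀) : ℝ :=
  if k ∈ Obs ω then 1 else 0

end


section AuxLemmas
open Matrix

lemma frobNorm_nonneg {n m : ℕ} (A : Matrix (Fin n) (Fin m) ℝ) : 0 ≤ frobNorm A :=
  Real.sqrt_nonneg _

lemma singVal_nonneg {n m : ℕ} (A : Matrix (Fin n) (Fin m) ℝ) (j : Fin m) : 0 ≤ singVal A j :=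
  Real.sqrt_nonneg _

lemma singVal_le_specNorm {n m : ℕ} (A : Matrix (Fin n) (Fin m) ℝ) (j : Fin m) :
    singVal A j ≤ specNorm A :=
  le_ciSup (Set.Finite.bddAbove (Set.finite_range _)) j

lemma specNorm_nonneg {n m : ℕ} (hm : 0 < m) (A : Matrix (Fin n) (Fin m) ℝ) : 0 ≤ specNorm A :=
  (singVal_nonneg A ⟨0, hm⟩).trans (singVal_le_specNorm A ⟨0, hm⟩)

lemma nucNorm_nonneg {n m : ℕ} (A : Matrix (Fin n) (Fin m) ℝ) : 0 ≤ nucNorm A :=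
  Finset.sum_nonneg fun j _ => singVal_nonneg A j

lemma eig_nonneg {n m : ℕ} (A : Matrix (Fin n) (Fin m) ℝ) (j : Fin m) :
    0 ≤ (Matrix.isHermitian_conjTranspose_mul_self A).eigenvalues j :=
  (Matrix.posSemidef_conjTranspose_mul_self A).eigenvalues_nonneg j

lemma sq_singVal {n m : ℕ} (A : Matrix (Fin n) (Fin m) ℝ) (j : Fin m) :
    singVal A j ^ 2 = (Matrix.isHermitian_conjTranspose_mul_self A).eigenvalues j :=
  Real.sq_sqrt (eig_nonneg A j)

/-- Spectral decomposition of `Aᵀ * A` over the reals. -/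
lemma spectral_real {n m : ℕ} (A : Matrix (Fin n) (Fin m) ℝ) :
    Aᵀ * A =
      ((Matrix.isHermitian_conjTranspose_mul_self A).eigenvectorUnitary : Matrix (Fin m) (Fin m) ℝ) *
        diagonal ((Matrix.isHermitian_conjTranspose_mul_self A).eigenvalues) *
      ((Matrix.isHermitian_conjTranspose_mul_self A).eigenvectorUnitary : Matrix (Fin m) (Fin m) ℝ)ᵀ := by
  have h := (Matrix.isHermitian_conjTranspose_mul_self A).spectral_theorem
  simp only [Unitary.conjStarAlgAut_apply, star_eq_conjTranspose, conjTranspose_eq_transpose_of_trivial] at h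
  exact h

lemma eigU_transpose_mul_self {n m : ℕ} (A : Matrix (Fin n) (Fin m) ℝ) :
    ((Matrix.isHermitian_conjTranspose_mul_self A).eigenvectorUnitary : Matrix (Fin m) (Fin m) ℝ)ᵀ *
      ((Matrix.isHermitian_conjTranspose_mul_self A).eigenvectorUnitary : Matrix (Fin m) (Fin m) ℝ) = 1 := by
  have h3 := (Matrix.isHermitian_conjTranspose_mul_self A).eigenvectorUnitary.2
  rw [Matrix.mem_unitaryGroup_iff'] at h3
  simpa only [star_eq_conjTranspose, conjTranspose_eq_transpose_of_trivial] using h3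

lemma eigU_mul_self_transpose {n m : ℕ} (A : Matrix (Fin n) (Fin m) ℝ) :
    ((Matrix.isHermitian_conjTranspose_mul_self A).eigenvectorUnitary : Matrix (Fin m) (Fin m) ℝ) *
      ((Matrix.isHermitian_conjTranspose_mul_self A).eigenvectorUnitary : Matrix (Fin m) (Fin m) ℝ)ᵀ = 1 := by
  have h2 := (Matrix.isHermitian_conjTranspose_mul_self A).eigenvectorUnitary.2
  rw [Matrix.mem_unitaryGroup_iff] at h2
  simpa only [star_eq_conjTranspose, conjTranspose_eq_transpose_of_trivial] using h2

/-- Operator-norm bound for matrix-vector multiplication. -/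
lemma mulVec_norm_le {n m : ℕ} (hm : 0 < m) (B : Matrix (Fin n) (Fin m) ℝ) (x : Fin m → ℝ) :
    Real.sqrt (∑ i, ((B *ᵥ x) i) ^ 2) ≤ specNorm B * Real.sqrt (∑ j, (x j) ^ 2) := by
  set W := ((Matrix.isHermitian_conjTranspose_mul_self B).eigenvectorUnitary :
    Matrix (Fin m) (Fin m) ℝ) with hWdef
  set lam := (Matrix.isHermitian_conjTranspose_mul_self B).eigenvalues with hlamdef
  set y := Wᵀ *ᵥ x with hy
  have e1 : ∑ i, ((B *ᵥ x) i) ^ 2 = (B *ᵥ x) ⬝ᵥ (B *ᵥ x) := by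
    simp [dotProduct, pow_two]
  have e2 : x ⬝ᵥ ((Bᵀ * B) *ᵥ x) = (B *ᵥ x) ⬝ᵥ (B *ᵥ x) := by
    rw [← mulVec_mulVec, dotProduct_mulVec, vecMul_transpose]
  have e3 : x ⬝ᵥ ((Bᵀ * B) *ᵥ x) = ∑ j, lam j * (y j) ^ 2 := by
    rw [spectral_real B, ← hWdef, ← hlamdef, ← mulVec_mulVec, ← mulVec_mulVec,
      dotProduct_mulVec]
    have hxW : x ᵥ* W = y := by
      rw [hy, ← vecMul_transpose, transpose_transpose]
    rw [hxW]
    simp [dotProduct, mulVec_diagonal, pow_two]; exact Finset.sum_congr rfl fun j _ => by ring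
  have e4 : ∑ j, (y j) ^ 2 = ∑ j, (x j) ^ 2 := by
    have : y ⬝ᵥ y = x ⬝ᵥ x := by
      rw [hy, dotProduct_mulVec, vecMul_transpose, mulVec_mulVec,
        eigU_mul_self_transpose, one_mulVec]
    simpa [dotProduct, pow_two] using this
  have key : ∑ i, ((B *ᵥ x) i) ^ 2 ≤ specNorm B ^ 2 * ∑ j, (x j) ^ 2 := by
    rw [e1, ← e2, e3, ← e4, Finset.mul_sum]
    apply Finset.sum_le_sum
    intro j _
    have h1 : lam j ≤ specNorm B ^ 2 := by
      rw [hlamdef, ← sq_singVal B j]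
      exact pow_le_pow_left₀ (singVal_nonneg B j) (singVal_le_specNorm B j) 2
    exact mul_le_mul_of_nonneg_right h1 (sq_nonneg _)
  calc Real.sqrt (∑ i, ((B *ᵥ x) i) ^ 2) ≤ Real.sqrt (specNorm B ^ 2 * ∑ j, (x j) ^ 2) :=
        Real.sqrt_le_sqrt key
    _ = specNorm B * Real.sqrt (∑ j, (x j) ^ 2) := by
        rw [Real.sqrt_mul (sq_nonneg _), Real.sqrt_sq (specNorm_nonneg hm B)]

end AuxLemmas
section AuxLemmas2
open Matrix

lemma minner_eq_trace {n m : ℕ} (A B : Matrix (Fin n) (Fin m) ℝ) :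
    minner A B = Matrix.trace (Aᵀ * B) := by
  simp only [minner, Matrix.trace, Matrix.diag, Matrix.mul_apply, Matrix.transpose_apply]
  rw [Finset.sum_comm]

/-- Cauchy–Schwarz for the Frobenius inner product. -/
lemma abs_minner_le_frob {n m : ℕ} (A B : Matrix (Fin n) (Fin m) ℝ) :
    |minner A B| ≤ frobNorm A * frobNorm B := by
  have h1 : |minner A B| ≤ ∑ p : Fin n × Fin m, |A p.1 p.2| * |B p.1 p.2| := by
    rw [minner, ← Fintype.sum_prod_type']
    refine (Finset.abs_sum_le_sum_abs _ _).trans ?_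
    simp [abs_mul, le_refl]
  have h2 := Real.sum_mul_le_sqrt_mul_sqrt Finset.univ
    (fun p : Fin n × Fin m => |A p.1 p.2|) (fun p => |B p.1 p.2|)
  simp only [sq_abs] at h2
  refine (h1.trans h2).trans ?_
  unfold frobNorm
  rw [← Fintype.sum_prod_type', ← Fintype.sum_prod_type']

/-- Trace duality: `|⟨A, B⟩| ≤ ‖A‖_* ‖B‖`. -/
lemma abs_minner_le_nuc_mul_spec {n : ℕ} (hn : 0 < n) (A B : Matrix (Fin n) (Fin n) ℝ) :
    |minner A B| ≤ nucNorm A * specNorm B := by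
  set W := ((Matrix.isHermitian_conjTranspose_mul_self A).eigenvectorUnitary :
    Matrix (Fin n) (Fin n) ℝ) with hWdef
  set lam := (Matrix.isHermitian_conjTranspose_mul_self A).eigenvalues with hlamdef
  have hWtW : Wᵀ * W = 1 := eigU_transpose_mul_self A
  have hWWt : W * Wᵀ = 1 := eigU_mul_self_transpose A
  have hSpec : Aᵀ * A = W * diagonal lam * Wᵀ := spectral_real A
  -- rotate the inner product by W
  have hrot : minner A B = minner (A * W) (B * W) := by
    have e : (B * W) * (Wᵀ * Aᵀ) = B * Aᵀ := by
      rw [Matrix.mul_assoc, ← Matrix.mul_assoc W Wᵀ Aᵀ, hWWt, Matrix.one_mul]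
    rw [minner_eq_trace, minner_eq_trace, Matrix.transpose_mul,
      Matrix.trace_mul_comm (Wᵀ * Aᵀ) (B * W), e, Matrix.trace_mul_comm]
  -- column sums of squares for A*W are the eigenvalues
  have hcolA : ∀ j, ∑ i, ((A * W) i j) ^ 2 = lam j := by
    intro j
    have h : ((A * W)ᵀ * (A * W)) j j = diagonal lam j j := by
      rw [Matrix.transpose_mul]
      have e : Wᵀ * Aᵀ * (A * W) = Wᵀ * (Aᵀ * A) * W := by simp only [Matrix.mul_assoc]
      rw [e, hSpec]
      simp only [Matrix.mul_assoc]
      rw [hWtW, Matrix.mul_one, ← Matrix.mul_assoc, hWtW, Matrix.one_mul]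
    simpa [Matrix.mul_apply, Matrix.transpose_apply, Matrix.diagonal_apply_eq, pow_two,
      mul_comm] using h
  -- columns of W are unit vectors
  have hcolW : ∀ j, ∑ i, (W i j) ^ 2 = 1 := by
    intro j
    have h := congrArg (fun M : Matrix (Fin n) (Fin n) ℝ => M j j) hWtW
    simpa [Matrix.mul_apply, Matrix.transpose_apply, Matrix.one_apply, pow_two] using h
  -- per-column bound
  have hcol : ∀ j, |∑ i, (A * W) i j * (B * W) i j| ≤ singVal A j * specNorm B := by
    intro j
    have hcs : |∑ i, (A * W) i j * (B * W) i j| ≤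
        Real.sqrt (∑ i, ((A * W) i j) ^ 2) * Real.sqrt (∑ i, ((B * W) i j) ^ 2) := by
      refine (Finset.abs_sum_le_sum_abs _ _).trans ?_
      have h := Real.sum_mul_le_sqrt_mul_sqrt Finset.univ
        (fun i => |(A * W) i j|) (fun i => |(B * W) i j|)
      simp only [sq_abs] at h
      simpa [abs_mul] using h
    have hA' : Real.sqrt (∑ i, ((A * W) i j) ^ 2) = singVal A j := by
      rw [hcolA j]; rfl
    have hB' : Real.sqrt (∑ i, ((B * W) i j) ^ 2) ≤ specNorm B := by
      have hmv := mulVec_norm_le hn B (fun l => W l j)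
      have hx : ∑ l, ((fun l => W l j) l) ^ 2 = 1 := hcolW j
      rw [hx, Real.sqrt_one, mul_one] at hmv
      calc Real.sqrt (∑ i, ((B * W) i j) ^ 2)
          = Real.sqrt (∑ i, ((B *ᵥ (fun l => W l j)) i) ^ 2) := rfl
        _ ≤ specNorm B := hmv
    calc |∑ i, (A * W) i j * (B * W) i j|
        ≤ Real.sqrt (∑ i, ((A * W) i j) ^ 2) * Real.sqrt (∑ i, ((B * W) i j) ^ 2) := hcs
      _ ≤ singVal A j * specNorm B := by
          rw [hA']
          exact mul_le_mul_of_nonneg_left hB' (singVal_nonneg A j)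
  have hsum : minner (A * W) (B * W) = ∑ j, ∑ i, (A * W) i j * (B * W) i j := by
    rw [minner]; rw [Finset.sum_comm]
  rw [hrot, hsum]
  calc |∑ j, ∑ i, (A * W) i j * (B * W) i j| ≤ ∑ j, |∑ i, (A * W) i j * (B * W) i j| :=
        Finset.abs_sum_le_sum_abs _ _
    _ ≤ ∑ j, singVal A j * specNorm B := Finset.sum_le_sum fun j _ => hcol j
    _ = nucNorm A * specNorm B := by rw [nucNorm, Finset.sum_mul]

end AuxLemmas2

section AuxLemmas3
open Matrix

variable {n m r : ℕ}

lemma minner_comm (A B : Matrix (Fin n) (Fin m) ℝ) : minner A B = minner B A := by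
  simp [minner, mul_comm]

lemma minner_add_right (A B C : Matrix (Fin n) (Fin m) ℝ) :
    minner A (B + C) = minner A B + minner A C := by
  simp [minner, mul_add, Finset.sum_add_distrib]

lemma minner_sub_right (A B C : Matrix (Fin n) (Fin m) ℝ) :
    minner A (B - C) = minner A B - minner A C := by
  simp [minner, mul_sub, Finset.sum_sub_distrib]

lemma minner_add_left (A B C : Matrix (Fin n) (Fin m) ℝ) :
    minner (A + B) C = minner A C + minner B C := by
  simp [minner, add_mul, Finset.sum_add_distrib]

lemma minner_sub_left (A B C : Matrix (Fin n) (Fin m) ℝ) :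
    minner (A - B) C = minner A C - minner B C := by
  simp [minner, sub_mul, Finset.sum_sub_distrib]

lemma minner_symm_mul_left (P : Matrix (Fin n) (Fin n) ℝ) (hP : Pᵀ = P)
    (A B : Matrix (Fin n) (Fin m) ℝ) : minner (P * A) B = minner A (P * B) := by
  rw [minner_eq_trace, minner_eq_trace, Matrix.transpose_mul, hP, Matrix.mul_assoc]

lemma minner_mul_symm_right (Q : Matrix (Fin m) (Fin m) ℝ) (hQ : Qᵀ = Q)
    (A B : Matrix (Fin n) (Fin m) ℝ) : minner (A * Q) B = minner A (B * Q) := by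
  rw [minner_eq_trace, minner_eq_trace, Matrix.transpose_mul, hQ, Matrix.mul_assoc,
    Matrix.trace_mul_comm Q (Aᵀ * B), Matrix.mul_assoc]

lemma projT_sym (U V : Matrix (Fin n) (Fin r) ℝ) (A B : Matrix (Fin n) (Fin n) ℝ) :
    minner (projT U V A) B = minner A (projT U V B) := by
  have hP : (U * Uᵀ)ᵀ = U * Uᵀ := by simp
  have hQ : (V * Vᵀ)ᵀ = V * Vᵀ := by simp
  have h3 : minner (U * Uᵀ * A * (V * Vᵀ)) B = minner A (U * Uᵀ * B * (V * Vᵀ)) := by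
    rw [minner_mul_symm_right (V * Vᵀ) hQ, minner_symm_mul_left (U * Uᵀ) hP,
      ← Matrix.mul_assoc]
  simp only [projT, minner_add_left, minner_sub_left, minner_add_right, minner_sub_right,
    minner_symm_mul_left (U * Uᵀ) hP, minner_mul_symm_right (V * Vᵀ) hQ, h3]
  rw [Matrix.mul_assoc (U * Uᵀ) B (V * Vᵀ)]

lemma projT_idem (U V : Matrix (Fin n) (Fin r) ℝ) (hU : Uᵀ * U = 1) (hV : Vᵀ * V = 1)
    (A : Matrix (Fin n) (Fin n) ℝ) : projT U V (projT U V A) = projT U V A := by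
  have hUc : ∀ X : Matrix (Fin r) (Fin n) ℝ, Uᵀ * (U * X) = X := by
    intro X; rw [← Matrix.mul_assoc, hU, Matrix.one_mul]
  have hVc : ∀ X : Matrix (Fin r) (Fin n) ℝ, Vᵀ * (V * X) = X := by
    intro X; rw [← Matrix.mul_assoc, hV, Matrix.one_mul]
  have hVc' : ∀ X : Matrix (Fin n) (Fin r) ℝ, (X * Vᵀ) * V = X := by
    intro X; rw [Matrix.mul_assoc, hV, Matrix.mul_one]
  simp only [projT, Matrix.mul_add, Matrix.add_mul, Matrix.mul_sub, Matrix.sub_mul,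
    Matrix.mul_assoc, hUc, hVc, hVc']
  abel

lemma projT_sub (U V : Matrix (Fin n) (Fin r) ℝ) (A B : Matrix (Fin n) (Fin n) ℝ) :
    projT U V (A - B) = projT U V A - projT U V B := by
  simp only [projT, Matrix.mul_sub, Matrix.sub_mul]
  abel

lemma projT_add_perp (U V : Matrix (Fin n) (Fin r) ℝ) (A : Matrix (Fin n) (Fin n) ℝ) :
    projT U V A + projTperp U V A = A := by
  simp [projTperp]

lemma minner_projT_perp_zero (U V : Matrix (Fin n) (Fin r) ℝ) (hU : Uᵀ * U = 1)
    (hV : Vᵀ * V = 1) (A B : Matrix (Fin n) (Fin n) ℝ) :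
    minner (projT U V A) (projTperp U V B) = 0 := by
  rw [projTperp, minner_sub_right, projT_sym, projT_sym, projT_idem U V hU hV, sub_self]

lemma minner_split (U V : Matrix (Fin n) (Fin r) ℝ) (hU : Uᵀ * U = 1) (hV : Vᵀ * V = 1)
    (A B : Matrix (Fin n) (Fin n) ℝ) :
    minner A B = minner (projT U V A) (projT U V B) +
      minner (projTperp U V A) (projTperp U V B) := by
  have c1 : minner (projT U V A) (projTperp U V B) = 0 := minner_projT_perp_zero U V hU hV A B
  have c2 : minner (projTperp U V A) (projT U V B) = 0 := by
    rw [minner_comm]; exact minner_projT_perp_zero U V hU hV B A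
  calc minner A B = minner (projT U V A + projTperp U V A) (projT U V B + projTperp U V B) := by
        rw [projT_add_perp, projT_add_perp]
    _ = minner (projT U V A) (projT U V B) + minner (projTperp U V A) (projTperp U V B) := by
        rw [minner_add_left, minner_add_right, minner_add_right, c1, c2]; ring

end AuxLemmas3

/-- Inner-product bound: if `R` has small components in `T` and `T⊥`,
and `Δ` lies mostly in `T`, then `|⟨Δ, R − W⟩| ≤ 4ρ‖P_T(Δ)‖_F` for every `W ∈ T⊥`
with `‖W‖ ≤ 1`. -/
theorem sqrtMC_inner_product_bound (n r : ℕ) (hn : 0 < n) (hr : 0 < r)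
    (U V : Matrix (Fin n) (Fin r) ℝ) (Sg : Fin r → ℝ) (L R Δ : Matrix (Fin n) (Fin n) ℝ)
    (ρ : ℝ)
    -- compact SVD of `L` (in particular it has rank `r`), defining the tangent space `T`
    (hSVD : L = U * Matrix.diagonal Sg * Vᵀ)
    (hU : Uᵀ * U = 1) (hV : Vᵀ * V = 1) (hSg : ∀ i, 0 < Sg i)
    (hρ : 0 ≤ ρ)
    (hRT : frobNorm (projT U V R) ≤ ρ)
    (hRperp : specNorm (projTperp U V R) ≤ 1 / 2)
    (hΔ : nucNorm (projTperp U V Δ) ≤ 2 * ρ * frobNorm (projT U V Δ)) :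
    ∀ W : Matrix (Fin n) (Fin n) ℝ, projT U V W = 0 → specNorm W ≤ 1 →
      |minner Δ (R - W)| ≤ 4 * ρ * frobNorm (projT U V Δ) := by
  intro W hW0 hWspec
  set f := frobNorm (projT U V Δ) with hf
  have hf0 : 0 ≤ f := frobNorm_nonneg _
  set N := nucNorm (projTperp U V Δ) with hN
  have hN0 : 0 ≤ N := nucNorm_nonneg _
  -- projections of R - W
  have hT : projT U V (R - W) = projT U V R := by
    rw [projT_sub, hW0, sub_zero]
  have hTperp : projTperp U V (R - W) = projTperp U V R - W := by
    rw [projTperp, hT, projTperp]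
    abel
  have hsplit := minner_split U V hU hV Δ (R - W)
  rw [hT, hTperp] at hsplit
  rw [hsplit, minner_sub_right]
  -- the three bounds
  have b1 : |minner (projT U V Δ) (projT U V R)| ≤ f * ρ :=
    (abs_minner_le_frob _ _).trans (mul_le_mul_of_nonneg_left hRT hf0)
  have b2 : |minner (projTperp U V Δ) (projTperp U V R)| ≤ N * (1 / 2) :=
    (abs_minner_le_nuc_mul_spec hn _ _).trans (mul_le_mul_of_nonneg_left hRperp hN0)
  have b3 : |minner (projTperp U V Δ) W| ≤ N * 1 :=
    (abs_minner_le_nuc_mul_spec hn _ _).trans (mul_le_mul_of_nonneg_left hWspec hN0)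
  have hNb : N ≤ 2 * ρ * f := hΔ
  have habs : |minner (projT U V Δ) (projT U V R) +
      (minner (projTperp U V Δ) (projTperp U V R) - minner (projTperp U V Δ) W)| ≤
      |minner (projT U V Δ) (projT U V R)| +
      (|minner (projTperp U V Δ) (projTperp U V R)| + |minner (projTperp U V Δ) W|) := by
    have h1 := abs_add_le (minner (projT U V Δ) (projT U V R))
      (minner (projTperp U V Δ) (projTperp U V R) - minner (projTperp U V Δ) W)
    have h2 := abs_sub (minner (projTperp U V Δ) (projTperp U V R))
      (minner (projTperp U V Δ) W)
    linarith
  refine habs.trans ?_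
  nlinarith [b1, b2, b3]
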